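/- Suppose Z⁽¹⁾, …, Z⁽ⁿ⁾ are i.i.d. random vectors in ℝ₊^d such that for each j ∈ {1,…,d}, lim_{t→∞} t·P(Z_j⁽¹⁾ > b(t)x) = κ_j x^{-α} for all x > 0, where b ∈ RV_{1/α}, and such that for each subset S ⊆ {1,…,d} with |S| = i ≥ 2, lim_{t→∞} t·P(Z_j⁽¹⁾ > b(t)^{1/i} x_j ∀ j ∈ S) = Π_{j∈S} κ_j x_j^{-α}. Fix S with |S| = i and x_j > 0 for j ∈ S; if the components within each vector are independent, then lim_{t→∞} t·P(Σ_{k=1}^n Z_j⁽ᵏ⁾ > b(t)^{1/i} x_j ∀ j ∈ S) = n^i Π_{j∈S} κ_j x_j^{-α}. -/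

import Mathlib

open MeasureTheory Filter ProbabilityTheory
open scoped ENNReal


lemma aux_pow_bound (n : ℕ) (p : ℝ) (h0 : 0 ≤ p) (h1 : p ≤ 1) :
    (1 - p) ^ n ≤ 1 - n * p + (n : ℝ) ^ 2 * p ^ 2 := by
  induction n with
  | zero => simp
  | succ m ih =>
    have h2 : (1 - p) ^ (m + 1) = (1 - p) ^ m * (1 - p) := pow_succ _ _
    have h3 : (1 - p) ^ m * (1 - p) ≤ (1 - m * p + (m : ℝ) ^ 2 * p ^ 2) * (1 - p) := by
      apply mul_le_mul_of_nonneg_right ih (by linarith)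
    have hm : (0:ℝ) ≤ m := Nat.cast_nonneg m
    push_cast
    nlinarith [sq_nonneg ((m:ℝ) * p), mul_nonneg (mul_nonneg hm h0) h0,
      mul_nonneg (mul_nonneg (mul_nonneg hm hm) h0) (mul_nonneg h0 h0)]

lemma aux_split (n : ℕ) (hn : 0 < n) (v : Fin n → ℝ) (hv : ∀ k, 0 ≤ v k)
    (a ε : ℝ) (ha : 0 < a) (hε0 : 0 < ε) (hε1 : ε < 1)
    (hsum : a < ∑ k, v k) :
    (∃ k, (1 - ε) * a < v k) ∨ ∃ k l, k ≠ l ∧ ε * a / n < v k ∧ ε * a / n < v l := by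
  by_contra hcon
  push_neg at hcon
  obtain ⟨h1, h2⟩ := hcon
  -- h1 : ∀ k, v k ≤ (1-ε)*a ; h2 : ∀ k l, k ≠ l → ε*a/n < v k → ¬ (ε*a/n < v l)
  by_cases hex : ∃ k0, ε * a / n < v k0
  · obtain ⟨k0, hk0⟩ := hex
    have hrest : ∀ k ∈ Finset.univ.erase k0, v k ≤ ε * a / n := by
      intro k hk
      have hkne : k ≠ k0 := (Finset.mem_erase.1 hk).1
      by_contra hlt
      push_neg at hlt
      exact absurd (h2 k k0 hkne hlt) (not_le.2 hk0)
    have hsum' : ∑ k, v k = v k0 + ∑ k ∈ Finset.univ.erase k0, v k :=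
      (Finset.add_sum_erase _ _ (Finset.mem_univ k0)).symm
    have hcard : (Finset.univ.erase k0).card = n - 1 := by
      simp [Finset.card_erase_of_mem]
    have hb : ∑ k ∈ Finset.univ.erase k0, v k ≤ (n - 1 : ℕ) * (ε * a / n) := by
      calc ∑ k ∈ Finset.univ.erase k0, v k ≤ (Finset.univ.erase k0).card • (ε * a / n) :=
            Finset.sum_le_card_nsmul _ _ _ hrest
        _ = (n - 1 : ℕ) * (ε * a / n) := by rw [hcard, nsmul_eq_mul]
    have hnn : ((n - 1 : ℕ) : ℝ) ≤ (n : ℝ) := by exact_mod_cast Nat.sub_le n 1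
    have hεa : 0 < ε * a / n := by positivity
    have : ∑ k, v k ≤ (1 - ε) * a + (n : ℝ) * (ε * a / n) := by
      rw [hsum']
      have := h1 k0
      nlinarith
    have hne : (n : ℝ) ≠ 0 := by positivity
    rw [mul_div_cancel₀ _ hne] at this
    nlinarith
  · push_neg at hex
    have : ∑ k, v k ≤ Finset.univ.card • (ε * a / (n:ℝ)) :=
      Finset.sum_le_card_nsmul _ _ _ (by intro k _; exact hex k)
    rw [nsmul_eq_mul, Finset.card_univ, Fintype.card_fin] at this
    have hne : (n : ℝ) ≠ 0 := by positivity
    rw [mul_div_cancel₀ _ hne] at this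
    nlinarith


lemma aux_group_indep {Ω : Type*} [MeasurableSpace Ω] (μ : Measure Ω)
    {n d : ℕ} (Z : Fin n → Ω → Fin d → ℝ)
    (hmeas : ∀ k, Measurable (Z k))
    (hindep : iIndepFun Z μ)
    (hcomp : ∀ k, iIndepFun
      (fun j ω => Z k ω j) μ) :
    iIndepFun
      (fun j ω k => Z k ω j) μ := by
  classical
  set Y : Fin d → Ω → (Fin n → ℝ) := fun j ω k => Z k ω j with hY
  have hYmeas : ∀ j, Measurable (Y j) := fun j =>
    measurable_pi_lambda _ (fun k => (measurable_pi_apply j).comp (hmeas k))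
  -- the π-systems
  set π : Fin d → Set (Set Ω) := fun j =>
    Set.preimage (Y j) ''
      (Set.pi Set.univ '' Set.pi Set.univ fun _ : Fin n => { s : Set ℝ | MeasurableSet s })
    with hπ
  rw [iIndepFun_iff_iIndep]
  refine iIndepSets.iIndep (fun j => (hYmeas j).comap_le) π
    (fun j => isPiSystem_pi.comap (Y j))
    (fun j => ?_) ?_
  · rw [← generateFrom_pi, MeasurableSpace.comap_generateFrom]
  · -- iIndepSets
    rw [iIndepSets_iff]
    intro T s hs
    -- extract rectangles
    choose! R hR hRs using fun j (h : j ∈ T) => hs j h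
    choose! B hB hBR using fun j (h : j ∈ T) => hR j h
    -- rewrite s j
    have hsj : ∀ j ∈ T, s j = ⋂ k : Fin n, (Z k) ⁻¹' ((fun v => v j) ⁻¹' B j k) := by
      intro j hj
      rw [← hRs j hj, ← hBR j hj]
      ext ω
      simp [Set.mem_pi, Y, Set.mem_iInter]
    have hBmeas : ∀ j ∈ T, ∀ k, MeasurableSet (B j k) := by
      intro j hj k
      have := hB j hj
      exact this k (Set.mem_univ k)
    -- μ(s j) = ∏ k, μ {ω | Z k ω j ∈ B j k}
    have hμsj : ∀ j ∈ T, μ (s j) = ∏ k : Fin n, μ ((Z k) ⁻¹' ((fun v => v j) ⁻¹' B j k)) := by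
      intro j hj
      rw [hsj j hj]
      exact hindep.meas_iInter (fun k =>
        ⟨(fun v => v j) ⁻¹' B j k, (measurable_pi_apply j) (hBmeas j hj k), rfl⟩)
    -- the big intersection
    have hbig : (⋂ j ∈ T, s j) = ⋂ k : Fin n, (Z k) ⁻¹' (⋂ j ∈ T, (fun v => v j) ⁻¹' B j k) := by
      ext ω
      simp only [Set.mem_iInter, Set.mem_preimage]
      constructor
      · intro h k j hj
        have := h j hj
        rw [hsj j hj] at this
        simpa using Set.mem_iInter.1 this k
      · intro h j hj
        rw [hsj j hj]
        exact Set.mem_iInter.2 fun k => h k j hj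
    rw [hbig]
    have h1 : μ (⋂ k : Fin n, (Z k) ⁻¹' (⋂ j ∈ T, (fun v => v j) ⁻¹' B j k))
        = ∏ k : Fin n, μ ((Z k) ⁻¹' (⋂ j ∈ T, (fun v => v j) ⁻¹' B j k)) :=
      hindep.meas_iInter (fun k =>
        ⟨⋂ j ∈ T, (fun v => v j) ⁻¹' B j k,
          MeasurableSet.biInter T.countable_toSet
            (fun j hj => (measurable_pi_apply j) (hBmeas j hj k)), rfl⟩)
    have h2 : ∀ k, μ ((Z k) ⁻¹' (⋂ j ∈ T, (fun v => v j) ⁻¹' B j k))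
        = ∏ j ∈ T, μ ((Z k) ⁻¹' ((fun v => v j) ⁻¹' B j k)) := by
      intro k
      have : (Z k) ⁻¹' (⋂ j ∈ T, (fun v => v j) ⁻¹' B j k)
          = ⋂ j ∈ T, (fun ω => Z k ω j) ⁻¹' B j k := by
        ext ω; simp
      rw [this]
      exact (hcomp k).meas_biInter (fun j hj => ⟨B j k, hBmeas j hj k, rfl⟩)
    calc μ (⋂ k, (Z k) ⁻¹' (⋂ j ∈ T, (fun v => v j) ⁻¹' B j k))
        = ∏ k : Fin n, ∏ j ∈ T, μ ((Z k) ⁻¹' ((fun v => v j) ⁻¹' B j k)) := by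
          rw [h1]; exact Finset.prod_congr rfl (fun k _ => h2 k)
      _ = ∏ j ∈ T, ∏ k : Fin n, μ ((Z k) ⁻¹' ((fun v => v j) ⁻¹' B j k)) := Finset.prod_comm
      _ = ∏ j ∈ T, μ (s j) := Finset.prod_congr rfl (fun j hj => (hμsj j hj).symm)

/-- Few large jumps for sums of i.i.d. vectors with independent components:
if each marginal tail satisfies `t·P(Z_j > b(t)x) → κ_j x^{-α}` and joint exceedances
satisfy `t·P(Z_j > b(t)^{1/|S|} x_j ∀ j ∈ S) → Π_{j∈S} κ_j x_j^{-α}`, then the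
`n`-fold sum satisfies
`t·P(Σ_k Z_j⁽ᵏ⁾ > b(t)^{1/i} x_j ∀ j ∈ S) → n^i Π_{j∈S} κ_j x_j^{-α}` for `|S| = i`. -/

theorem few_large_jumps_independent_components
    {Ω : Type*} [MeasurableSpace Ω] (μ : Measure Ω) [IsProbabilityMeasure μ]
    (d n : ℕ) (hn : 0 < n) (α : ℝ) (hα : 0 < α) (κ : Fin d → ℝ) (hκ : ∀ j, 0 < κ j)
    (Z : Fin n → Ω → Fin d → ℝ)
    (hmeas : ∀ k, Measurable (Z k))
    (hnonneg : ∀ k ω j, 0 ≤ Z k ω j)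
    (hindep : iIndepFun Z μ)
    (hident : ∀ k, Measure.map (Z k) μ = Measure.map (Z ⟨0, hn⟩) μ)
    (hcomp : ∀ k, iIndepFun
      (fun j ω => Z k ω j) μ)
    (b : ℝ → ℝ) (hbpos : ∀ t, 0 < b t) (hbtop : Tendsto b atTop atTop)
    (hbrv : ∀ s : ℝ, 0 < s →
      Tendsto (fun t : ℝ => b (t * s) / b t) atTop (nhds (s ^ (α⁻¹))))
    (hmarg : ∀ j : Fin d, ∀ x : ℝ, 0 < x →
      Tendsto (fun t : ℝ => t * (μ {ω | b t * x < Z ⟨0, hn⟩ ω j}).toReal)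
        atTop (nhds (κ j * x ^ (-α))))
    (hjoint : ∀ S : Finset (Fin d), 2 ≤ S.card → ∀ x : Fin d → ℝ, (∀ j ∈ S, 0 < x j) →
      Tendsto (fun t : ℝ =>
          t * (μ {ω | ∀ j ∈ S, (b t) ^ (((S.card : ℝ))⁻¹) * x j < Z ⟨0, hn⟩ ω j}).toReal)
        atTop (nhds (∏ j ∈ S, κ j * x j ^ (-α))))
    (i : ℕ) (hi : 1 ≤ i) (S : Finset (Fin d)) (hS : S.card = i)
    (x : Fin d → ℝ) (hx : ∀ j ∈ S, 0 < x j) :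
    Tendsto (fun t : ℝ =>
        t * (μ {ω | ∀ j ∈ S, (b t) ^ ((i : ℝ)⁻¹) * x j < ∑ k, Z k ω j}).toReal)
      atTop (nhds ((n : ℝ) ^ i * ∏ j ∈ S, κ j * x j ^ (-α))) := by
  classical
  set c : ℝ → ℝ := fun t => (b t) ^ ((i : ℝ)⁻¹) with hc
  have hcpos : ∀ t, 0 < c t := fun t => Real.rpow_pos_of_pos (hbpos t) _
  have hctop : Tendsto c atTop atTop :=
    (tendsto_rpow_atTop (by positivity)).comp hbtop
  set F : Fin d → ℝ → ℝ := fun j s => (μ {ω | s < Z ⟨0, hn⟩ ω j}).toReal with hF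
  -- basic facts about F
  have hFnonneg : ∀ j s, 0 ≤ F j s := fun j s => ENNReal.toReal_nonneg
  have hFle1 : ∀ j s, F j s ≤ 1 := by
    intro j s
    rw [hF]
    exact ENNReal.toReal_le_of_le_ofReal one_pos.le (by simpa using prob_le_one)
  have hFanti : ∀ j, Antitone (F j) := by
    intro j s s' hss'
    apply ENNReal.toReal_mono (measure_ne_top μ _)
    exact measure_mono (fun ω hω => lt_of_le_of_lt hss' hω)
  -- tail tends to zero
  have hF0 : ∀ j, Tendsto (F j) atTop (nhds 0) := by
    intro j
    have hmeasev : ∀ s : ℝ, MeasurableSet {ω | s < Z ⟨0, hn⟩ ω j} := fun s =>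
      ((measurable_pi_apply j).comp (hmeas _)) measurableSet_Ioi
    have hanti : Antitone (fun s : ℝ => {ω | s < Z ⟨0, hn⟩ ω j}) := by
      intro s s' hss' ω hω
      exact lt_of_le_of_lt hss' hω
    have hiInter : (⋂ s : ℝ, {ω | s < Z ⟨0, hn⟩ ω j}) = ∅ := by
      ext ω
      simp only [Set.mem_iInter, Set.mem_setOf_eq, Set.mem_empty_iff_false, iff_false, not_forall,
        not_lt]
      exact ⟨Z ⟨0, hn⟩ ω j, le_refl _⟩
    have h1 : Tendsto (fun s : ℝ => μ {ω | s < Z ⟨0, hn⟩ ω j}) atTop (nhds 0) := by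
      have := tendsto_measure_iInter_atTop (μ := μ)
        (fun s => (hmeasev s).nullMeasurableSet) hanti ⟨0, measure_ne_top μ _⟩
      rwa [hiInter, measure_empty] at this
    have h2 : Tendsto ENNReal.toReal (nhds (0 : ℝ≥0∞)) (nhds (0 : ℝ≥0∞).toReal) :=
      ENNReal.tendsto_toReal (by simp)
    have h3 := h2.comp h1
    simp only [ENNReal.toReal_zero] at h3
    exact h3
  have hF0c : ∀ j, ∀ y : ℝ, 0 < y →
      Tendsto (fun t => F j (c t * y)) atTop (nhds 0) := by
    intro j y hy
    exact (hF0 j).comp (hctop.atTop_mul_const hy)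
  -- identical marginals
  have hFk : ∀ (k : Fin n) (j : Fin d) (s : ℝ),
      μ {ω | s < Z k ω j} = μ {ω | s < Z ⟨0, hn⟩ ω j} := by
    intro k j s
    have hBmeas : MeasurableSet {v : Fin d → ℝ | s < v j} :=
      (measurable_pi_apply j) measurableSet_Ioi
    have h1 : μ {ω | s < Z k ω j} = (Measure.map (Z k) μ) {v : Fin d → ℝ | s < v j} := by
      rw [Measure.map_apply (hmeas k) hBmeas]; rfl
    have h2 : μ {ω | s < Z ⟨0, hn⟩ ω j} = (Measure.map (Z ⟨0, hn⟩) μ) {v : Fin d → ℝ | s < v j} := by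
      rw [Measure.map_apply (hmeas _) hBmeas]; rfl
    rw [h1, h2, hident k]
  -- the fundamental limit along c for any positive family
  have hG : ∀ x' : Fin d → ℝ, (∀ j ∈ S, 0 < x' j) →
      Tendsto (fun t => t * ∏ j ∈ S, F j (c t * x' j)) atTop
        (nhds (∏ j ∈ S, κ j * x' j ^ (-α))) := by
    intro x' hx'
    rcases eq_or_lt_of_le hi with hi1 | hi2
    · -- i = 1 : S is a singleton
      obtain ⟨j0, hj0⟩ := Finset.card_eq_one.1 (by rw [hS, ← hi1])
      have hceq : c = b := by
        funext t
        rw [hc, ← hi1]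
        push_cast
        rw [inv_one, Real.rpow_one]
      subst hj0
      simp only [Finset.prod_singleton]
      rw [hceq]
      exact hmarg j0 (x' j0) (hx' j0 (Finset.mem_singleton_self j0))
    · -- i ≥ 2
      have hcard2 : 2 ≤ S.card := by omega
      have hfac0 : ∀ t : ℝ, μ {ω | ∀ j ∈ S, c t * x' j < Z ⟨0, hn⟩ ω j}
          = ∏ j ∈ S, μ {ω | c t * x' j < Z ⟨0, hn⟩ ω j} := by
        intro t
        have hset : {ω | ∀ j ∈ S, c t * x' j < Z ⟨0, hn⟩ ω j}
            = ⋂ j ∈ S, (fun ω => Z ⟨0, hn⟩ ω j) ⁻¹' Set.Ioi (c t * x' j) := by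
          ext ω; simp [Set.mem_iInter]
        rw [hset]
        exact (hcomp ⟨0, hn⟩).meas_biInter
          (fun j _ => ⟨Set.Ioi (c t * x' j), measurableSet_Ioi, rfl⟩)
      have := hjoint S hcard2 x' hx'
      rw [hS] at this
      apply this.congr
      intro t
      rw [show (b t ^ ((i:ℝ))⁻¹ : ℝ) = c t from rfl, hfac0 t, ENNReal.toReal_prod]
  have hPpos : ∀ x' : Fin d → ℝ, (∀ j ∈ S, 0 < x' j) →
      0 < ∏ j ∈ S, κ j * x' j ^ (-α) := by
    intro x' hx'
    exact Finset.prod_pos fun j hj =>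
      mul_pos (hκ j) (Real.rpow_pos_of_pos (hx' j hj) _)
  -- eventual positivity of F along c
  have hFpos : ∀ x' : Fin d → ℝ, (∀ j ∈ S, 0 < x' j) →
      ∀ᶠ t in atTop, ∀ j ∈ S, 0 < F j (c t * x' j) := by
    intro x' hx'
    have hlim := hG x' hx'
    have hpos := hPpos x' hx'
    have hev1 : ∀ᶠ t in atTop, 0 < t * ∏ j ∈ S, F j (c t * x' j) :=
      hlim.eventually (eventually_gt_nhds hpos)
    filter_upwards [hev1, eventually_gt_atTop (0 : ℝ)] with t hprod ht j hj
    have hprodpos : 0 < ∏ j ∈ S, F j (c t * x' j) := by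
      by_contra hle
      push_neg at hle
      nlinarith
    rcases lt_or_eq_of_le (hFnonneg j (c t * x' j)) with h | h
    · exact h
    · exfalso
      rw [Finset.prod_eq_zero hj h.symm] at hprodpos
      exact lt_irrefl 0 hprodpos
  -- ratio limit
  have hR : ∀ j ∈ S, ∀ y z : ℝ, 0 < y → 0 < z →
      Tendsto (fun t => F j (c t * y) / F j (c t * z)) atTop
        (nhds (y ^ (-α) / z ^ (-α))) := by
    intro j hj y z hy hz
    set wy : Fin d → ℝ := fun j' => if j' = j then y else 1 with hwy
    set wz : Fin d → ℝ := fun j' => if j' = j then z else 1 with hwz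
    have hwypos : ∀ j' ∈ S, 0 < wy j' := by
      intro j' _
      rw [hwy]
      by_cases h : j' = j <;> simp [h, hy]
    have hwzpos : ∀ j' ∈ S, 0 < wz j' := by
      intro j' _
      rw [hwz]
      by_cases h : j' = j <;> simp [h, hz]
    have hGy := hG wy hwypos
    have hGz := hG wz hwzpos
    set C : ℝ := ∏ j' ∈ S.erase j, κ j' with hC
    have hCpos : 0 < C := Finset.prod_pos fun j' _ => hκ j'
    have hPyeq : (∏ j' ∈ S, κ j' * wy j' ^ (-α)) = κ j * y ^ (-α) * C := by
      rw [← Finset.mul_prod_erase S _ hj]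
      congr 1
      · rw [hwy]; simp
      · rw [hC]
        apply Finset.prod_congr rfl
        intro j' hj'
        have : j' ≠ j := (Finset.mem_erase.1 hj').1
        rw [hwy]; simp [this]
    have hPzeq : (∏ j' ∈ S, κ j' * wz j' ^ (-α)) = κ j * z ^ (-α) * C := by
      rw [← Finset.mul_prod_erase S _ hj]
      congr 1
      · rw [hwz]; simp
      · rw [hC]
        apply Finset.prod_congr rfl
        intro j' hj'
        have : j' ≠ j := (Finset.mem_erase.1 hj').1
        rw [hwz]; simp [this]
    have hPzpos : 0 < ∏ j' ∈ S, κ j' * wz j' ^ (-α) := hPpos wz hwzpos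
    have hdiv := hGy.div hGz (ne_of_gt hPzpos)
    have hlimeq : (∏ j' ∈ S, κ j' * wy j' ^ (-α)) / (∏ j' ∈ S, κ j' * wz j' ^ (-α))
        = y ^ (-α) / z ^ (-α) := by
      rw [hPyeq, hPzeq, mul_div_mul_right _ _ (ne_of_gt hCpos),
        mul_div_mul_left _ _ (ne_of_gt (hκ j))]
    rw [hlimeq] at hdiv
    apply hdiv.congr'
    filter_upwards [hFpos wy hwypos, hFpos wz hwzpos, eventually_gt_atTop (0 : ℝ)]
      with t hty htz ht
    have hprodwy : (∏ j' ∈ S, F j' (c t * wy j'))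
        = F j (c t * y) * ∏ j' ∈ S.erase j, F j' (c t * 1) := by
      rw [← Finset.mul_prod_erase S _ hj]
      congr 1
      · rw [hwy]; simp
      · apply Finset.prod_congr rfl
        intro j' hj'
        have : j' ≠ j := (Finset.mem_erase.1 hj').1
        rw [hwy]; simp [this]
    have hprodwz : (∏ j' ∈ S, F j' (c t * wz j'))
        = F j (c t * z) * ∏ j' ∈ S.erase j, F j' (c t * 1) := by
      rw [← Finset.mul_prod_erase S _ hj]
      congr 1
      · rw [hwz]; simp
      · apply Finset.prod_congr rfl
        intro j' hj'
        have : j' ≠ j := (Finset.mem_erase.1 hj').1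
        rw [hwz]; simp [this]
    have hDpos : 0 < ∏ j' ∈ S.erase j, F j' (c t * 1) := by
      apply Finset.prod_pos
      intro j' hj'
      have hj'S : j' ∈ S := Finset.mem_of_mem_erase hj'
      have := hty j' hj'S
      have hne : j' ≠ j := (Finset.mem_erase.1 hj').1
      rw [hwy] at this
      simpa [hne] using this
    have hFzpos : 0 < F j (c t * z) := by
      have := htz j hj
      rw [hwz] at this
      simpa using this
    simp only [Pi.div_apply]
    rw [hprodwy, hprodwz]
    simp only [mul_one] at hDpos ⊢
    have hDne := ne_of_gt hDpos
    have hFzne := ne_of_gt hFzpos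
    have htne := ne_of_gt ht
    field_simp
  -- factorization of the sum event
  have hfac : ∀ a : Fin d → ℝ,
      μ {ω | ∀ j ∈ S, a j < ∑ k, Z k ω j}
        = ∏ j ∈ S, μ {ω | a j < ∑ k, Z k ω j} := by
    intro a
    have hgi := aux_group_indep μ Z hmeas hindep hcomp
    have hsum_indep : iIndepFun
        (fun j ω => ∑ k, Z k ω j) μ := by
      have := hgi.comp (fun _ : Fin d => fun v : Fin n → ℝ => ∑ k, v k)
        (fun _ => Finset.measurable_sum Finset.univ (fun k _ => measurable_pi_apply k))
      exact this
    have hset : {ω | ∀ j ∈ S, a j < ∑ k, Z k ω j}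
        = ⋂ j ∈ S, (fun ω => ∑ k, Z k ω j) ⁻¹' Set.Ioi (a j) := by
      ext ω; simp [Set.mem_iInter]
    rw [hset]
    rw [hsum_indep.meas_biInter (fun j _ => ⟨Set.Ioi (a j), measurableSet_Ioi, rfl⟩)]
    rfl
  set g : Fin d → ℝ → ℝ := fun j t => (μ {ω | c t * x j < ∑ k, Z k ω j}).toReal with hg
  have hgnonneg : ∀ j t, 0 ≤ g j t := fun j t => ENNReal.toReal_nonneg
  have hidentity : ∀ t : ℝ,
      t * (μ {ω | ∀ j ∈ S, (b t) ^ ((i : ℝ)⁻¹) * x j < ∑ k, Z k ω j}).toReal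
        = t * ∏ j ∈ S, g j t := by
    intro t
    rw [hfac (fun j => c t * x j), ENNReal.toReal_prod]
  -- upper estimate for each factor
  have hup : ∀ ε : ℝ, 0 < ε → ε < 1 → ∀ j ∈ S, ∀ t : ℝ,
      g j t ≤ n * F j (c t * ((1 - ε) * x j)) + (n : ℝ) ^ 2 * (F j (c t * (ε * x j / n))) ^ 2 := by
    intro ε hε0 hε1 j hj t
    set a : ℝ := c t * x j with ha
    have hapos : 0 < a := mul_pos (hcpos t) (hx j hj)
    set A : Fin n → Set Ω := fun k => {ω | (1 - ε) * a < Z k ω j} with hA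
    set D : Fin n × Fin n → Set Ω := fun p =>
      if p.1 = p.2 then ∅ else {ω | ε * a / n < Z p.1 ω j} ∩ {ω | ε * a / n < Z p.2 ω j} with hD
    have hsub : {ω | c t * x j < ∑ k, Z k ω j} ⊆ (⋃ k, A k) ∪ ⋃ p, D p := by
      intro ω hω
      rcases aux_split n hn (fun k => Z k ω j) (fun k => hnonneg k ω j) a ε hapos hε0 hε1 hω
        with ⟨k, hk⟩ | ⟨k, l, hkl, hk, hl⟩
      · exact Or.inl (Set.mem_iUnion.2 ⟨k, hk⟩)
      · refine Or.inr (Set.mem_iUnion.2 ⟨(k, l), ?_⟩)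
        rw [hD]
        simp only [hkl, if_false]
        exact ⟨hk, hl⟩
    have hbound : μ {ω | c t * x j < ∑ k, Z k ω j}
        ≤ (n : ℝ≥0∞) * μ {ω | (1 - ε) * a < Z ⟨0, hn⟩ ω j}
          + (n : ℝ≥0∞) ^ 2 * (μ {ω | ε * a / n < Z ⟨0, hn⟩ ω j}) ^ 2 := by
      refine le_trans (measure_mono hsub) (le_trans (measure_union_le _ _) ?_)
      gcongr
      · -- first union
        have : ∀ k, μ (A k) = μ {ω | (1 - ε) * a < Z ⟨0, hn⟩ ω j} := fun k => hFk k j _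
        refine le_trans (measure_iUnion_fintype_le μ A) (le_of_eq ?_)
        calc ∑ k, μ (A k) = ∑ _k : Fin n, μ {ω | (1 - ε) * a < Z ⟨0, hn⟩ ω j} :=
              Finset.sum_congr rfl (fun k _ => this k)
          _ = (n : ℝ≥0∞) * μ {ω | (1 - ε) * a < Z ⟨0, hn⟩ ω j} := by
              rw [Finset.sum_const, Finset.card_univ, Fintype.card_fin, nsmul_eq_mul]
      · -- second union
        refine le_trans (measure_iUnion_fintype_le μ D) ?_
        have hDle' : ∀ p : Fin n × Fin n,
            μ (D p) ≤ (μ {ω | ε * a / n < Z ⟨0, hn⟩ ω j}) ^ 2 := by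
          intro ⟨k, l⟩
          rw [hD]
          by_cases hkl : k = l
          · simp [hkl]
          · simp only [hkl, if_false]
            have hIF : IndepFun (fun ω => Z k ω j) (fun ω => Z l ω j) μ :=
              (hindep.indepFun hkl).comp (measurable_pi_apply j) (measurable_pi_apply j)
            have := (indepFun_iff_measure_inter_preimage_eq_mul.1 hIF)
              (Set.Ioi (ε * a / n)) (Set.Ioi (ε * a / n)) measurableSet_Ioi measurableSet_Ioi
            have heq : μ ({ω | ε * a / n < Z k ω j} ∩ {ω | ε * a / n < Z l ω j})
                = μ {ω | ε * a / n < Z k ω j} * μ {ω | ε * a / n < Z l ω j} := this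
            rw [heq, hFk k j _, hFk l j _, sq]
        calc ∑ p, μ (D p) ≤ ∑ _p : Fin n × Fin n, (μ {ω | ε * a / n < Z ⟨0, hn⟩ ω j}) ^ 2 :=
              Finset.sum_le_sum (fun p _ => hDle' p)
          _ = (n : ℝ≥0∞) ^ 2 * (μ {ω | ε * a / n < Z ⟨0, hn⟩ ω j}) ^ 2 := by
              rw [Finset.sum_const, Finset.card_univ, Fintype.card_prod, Fintype.card_fin,
                nsmul_eq_mul]
              push_cast
              ring
    have hfin1 : (n : ℝ≥0∞) * μ {ω | (1 - ε) * a < Z ⟨0, hn⟩ ω j} ≠ ⊤ :=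
      ENNReal.mul_ne_top (by simp) (measure_ne_top μ _)
    have hfin2 : (n : ℝ≥0∞) ^ 2 * (μ {ω | ε * a / n < Z ⟨0, hn⟩ ω j}) ^ 2 ≠ ⊤ :=
      ENNReal.mul_ne_top (by simp) (ENNReal.pow_ne_top (measure_ne_top μ _))
    have := ENNReal.toReal_mono (ENNReal.add_ne_top.2 ⟨hfin1, hfin2⟩) hbound
    rw [ENNReal.toReal_add hfin1 hfin2, ENNReal.toReal_mul, ENNReal.toReal_mul,
      ENNReal.toReal_pow, ENNReal.toReal_pow, ENNReal.toReal_natCast] at this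
    have he1 : (1 - ε) * a = c t * ((1 - ε) * x j) := by rw [ha]; ring
    have he2 : ε * a / n = c t * (ε * x j / n) := by rw [ha]; ring
    rw [he1, he2] at this
    exact this
  -- lower estimate for each factor
  have hlow : ∀ j ∈ S, ∀ t : ℝ,
      n * F j (c t * x j) * (1 - n * F j (c t * x j)) ≤ g j t := by
    intro j hj t
    set a : ℝ := c t * x j with ha
    set A : Fin n → Set Ω := fun k => {ω | a < Z k ω j} with hA
    have hAmeas : ∀ k, MeasurableSet (A k) := fun k =>
      ((measurable_pi_apply j).comp (hmeas k)) measurableSet_Ioi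
    have hsub : (⋃ k, A k) ⊆ {ω | a < ∑ k, Z k ω j} := by
      intro ω hω
      obtain ⟨k, hk⟩ := Set.mem_iUnion.1 hω
      have : Z k ω j ≤ ∑ k', Z k' ω j :=
        Finset.single_le_sum (fun k' _ => hnonneg k' ω j) (Finset.mem_univ k)
      exact lt_of_lt_of_le hk this
    have hprod : μ (⋂ k, (A k)ᶜ) = ∏ k : Fin n, μ ((A k)ᶜ) := by
      refine hindep.meas_iInter (fun k => ⟨{v : Fin d → ℝ | a < v j}ᶜ,
        ((measurable_pi_apply j) measurableSet_Ioi).compl, ?_⟩)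
      rw [Set.preimage_compl]
      rfl
    have hcompl : ∀ k, μ ((A k)ᶜ) = 1 - μ {ω | a < Z ⟨0, hn⟩ ω j} := by
      intro k
      rw [prob_compl_eq_one_sub (hAmeas k), hA]
      rw [hFk k j a]
    set pE : ℝ≥0∞ := μ {ω | a < Z ⟨0, hn⟩ ω j} with hp
    have hple : pE ≤ 1 := prob_le_one
    have hq : μ (⋂ k, (A k)ᶜ) = (1 - pE) ^ n := by
      rw [hprod]
      calc ∏ k : Fin n, μ ((A k)ᶜ) = ∏ _k : Fin n, (1 - pE) :=
            Finset.prod_congr rfl (fun k _ => hcompl k)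
        _ = (1 - pE) ^ n := by rw [Finset.prod_const, Finset.card_univ, Fintype.card_fin]
    have hUcompl : (⋃ k, A k)ᶜ = ⋂ k, (A k)ᶜ := Set.compl_iUnion A
    have hU : μ (⋃ k, A k) = 1 - (1 - pE) ^ n := by
      have h1 : μ ((⋃ k, A k)ᶜ) = 1 - μ (⋃ k, A k) :=
        prob_compl_eq_one_sub (MeasurableSet.iUnion hAmeas)
      rw [hUcompl, hq] at h1
      have hle1 : μ (⋃ k, A k) ≤ 1 := prob_le_one
      rw [h1, ENNReal.sub_sub_cancel ENNReal.one_ne_top hle1]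
    have hmono := ENNReal.toReal_mono (measure_ne_top μ _) (measure_mono hsub)
    rw [hU] at hmono
    have hsubtop : ((1:ℝ≥0∞) - pE) ^ n ≤ 1 := by
      apply pow_le_one₀ (zero_le) tsub_le_self
    have htR : ((1:ℝ≥0∞) - (1 - pE) ^ n).toReal = 1 - (1 - pE.toReal) ^ n := by
      rw [ENNReal.toReal_sub_of_le hsubtop ENNReal.one_ne_top, ENNReal.toReal_pow,
        ENNReal.toReal_sub_of_le hple ENNReal.one_ne_top]
      simp
    rw [htR] at hmono
    have hFeq : F j a = pE.toReal := rfl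
    have hb := aux_pow_bound n pE.toReal ENNReal.toReal_nonneg
      (by rw [← ENNReal.toReal_one]; exact ENNReal.toReal_mono ENNReal.one_ne_top hple)
    have : g j t = (μ {ω | a < ∑ k, Z k ω j}).toReal := by rw [hg, ha]
    rw [this]
    rw [hFeq]
    nlinarith [hmono, hb]
  -- now the final convergence
  have hmain : (fun t : ℝ =>
      t * (μ {ω | ∀ j ∈ S, (b t) ^ ((i : ℝ)⁻¹) * x j < ∑ k, Z k ω j}).toReal)
      = fun t => t * ∏ j ∈ S, g j t := funext hidentity
  rw [hmain]
  set L : ℝ := (n : ℝ) ^ i * ∏ j ∈ S, κ j * x j ^ (-α) with hL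
  have hP : 0 < ∏ j ∈ S, κ j * x j ^ (-α) := hPpos x hx
  have hnpos : (0:ℝ) < n := by exact_mod_cast hn
  have hLpos : 0 < L := mul_pos (pow_pos hnpos i) hP
  rw [tendsto_order]
  constructor
  · -- lower bound
    intro p hp
    have h2 : Tendsto (fun t => ∏ j ∈ S, (1 - n * F j (c t * x j))) atTop (nhds 1) := by
      have : Tendsto (fun t => ∏ j ∈ S, (1 - n * F j (c t * x j))) atTop
          (nhds (∏ _j ∈ S, (1:ℝ))) := by
        apply tendsto_finset_prod
        intro j hj
        have := (tendsto_const_nhds (x := (1:ℝ))).sub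
          ((tendsto_const_nhds (x := (n:ℝ))).mul (hF0c j (x j) (hx j hj)))
        simpa using this
      simpa using this
    have hell : Tendsto (fun t => (n:ℝ)^i * (t * ∏ j ∈ S, F j (c t * x j)) *
        ∏ j ∈ S, (1 - n * F j (c t * x j))) atTop (nhds L) := by
      have := (tendsto_const_nhds (x := ((n:ℝ)^i)).mul (hG x hx)).mul h2
      simpa [hL] using this
    have hsmall : ∀ᶠ t in atTop, ∀ j ∈ S, n * F j (c t * x j) ≤ 1 := by
      rw [eventually_all_finset]
      intro j hj
      have : Tendsto (fun t => n * F j (c t * x j)) atTop (nhds 0) := by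
        have := (tendsto_const_nhds (x := (n:ℝ))).mul (hF0c j (x j) (hx j hj))
        simpa using this
      exact this.eventually (eventually_le_nhds one_pos)
    filter_upwards [hsmall, eventually_ge_atTop (0:ℝ),
      hell.eventually (eventually_gt_nhds hp)] with t h1 ht hpt
    refine lt_of_lt_of_le hpt ?_
    have hprodle : ∏ j ∈ S, (n * F j (c t * x j) * (1 - n * F j (c t * x j)))
        ≤ ∏ j ∈ S, g j t := by
      apply Finset.prod_le_prod
      · intro j hj
        apply mul_nonneg (mul_nonneg hnpos.le (hFnonneg j _))
        linarith [h1 j hj]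
      · intro j hj
        exact hlow j hj t
    have hrw : (n:ℝ)^i * (t * ∏ j ∈ S, F j (c t * x j)) *
        ∏ j ∈ S, (1 - n * F j (c t * x j))
        = t * ∏ j ∈ S, (n * F j (c t * x j) * (1 - n * F j (c t * x j))) := by
      rw [Finset.prod_mul_distrib, Finset.prod_mul_distrib, Finset.prod_const, hS]
      ring
    rw [hrw]
    exact mul_le_mul_of_nonneg_left hprodle ht
  · -- upper bound
    intro q hq
    obtain ⟨ε, ⟨hεlt, hε1⟩, hε0⟩ : ∃ ε : ℝ,
        ((n:ℝ)^i * ∏ j ∈ S, κ j * ((1 - ε) * x j) ^ (-α) < q ∧ ε < 1) ∧ 0 < ε := by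
      have hval : Tendsto (fun ε : ℝ => (n:ℝ)^i * ∏ j ∈ S, κ j * ((1 - ε) * x j) ^ (-α))
          (nhds 0) (nhds ((n:ℝ)^i * ∏ j ∈ S, κ j * ((1 - 0) * x j) ^ (-α))) := by
        apply Tendsto.mul tendsto_const_nhds
        apply tendsto_finset_prod
        intro j hj
        apply Tendsto.mul tendsto_const_nhds
        apply Tendsto.rpow_const
        · exact (tendsto_const_nhds.sub tendsto_id).mul tendsto_const_nhds
        · left
          have := hx j hj
          intro hzero
          nlinarith [hzero]
      simp only [sub_zero, one_mul] at hval
      rw [← hL] at hval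
      have h1 : ∀ᶠ ε in nhds (0:ℝ),
          (n:ℝ)^i * ∏ j ∈ S, κ j * ((1 - ε) * x j) ^ (-α) < q :=
        hval.eventually (eventually_lt_nhds hq)
      have h2 : ∀ᶠ ε in nhds (0:ℝ), ε < 1 := eventually_lt_nhds zero_lt_one
      have h3 := ((h1.and h2).filter_mono (nhdsWithin_le_nhds (s := Set.Ioi (0:ℝ)))).and
        (eventually_mem_nhdsWithin)
      obtain ⟨ε, hε, hmem⟩ := h3.exists
      exact ⟨ε, hε, hmem⟩
    set x1 : Fin d → ℝ := fun j => (1 - ε) * x j with hx1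
    have hx1pos : ∀ j ∈ S, 0 < x1 j := fun j hj => mul_pos (by linarith) (hx j hj)
    set x2 : Fin d → ℝ := fun j => ε * x j / n with hx2
    have hx2pos : ∀ j ∈ S, 0 < x2 j := fun j hj =>
      div_pos (mul_pos hε0 (hx j hj)) hnpos
    have hfac1 : ∀ j ∈ S, Tendsto (fun t =>
        1 + n * (F j (c t * x2 j) / F j (c t * x1 j) * F j (c t * x2 j)))
        atTop (nhds 1) := by
      intro j hj
      have hr := (hR j hj (x2 j) (x1 j) (hx2pos j hj) (hx1pos j hj)).mul
        (hF0c j (x2 j) (hx2pos j hj))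
      have := (tendsto_const_nhds (x := (1:ℝ))).add
        ((tendsto_const_nhds (x := (n:ℝ))).mul hr)
      simpa using this
    have hprod1 : Tendsto (fun t => ∏ j ∈ S,
        (1 + n * (F j (c t * x2 j) / F j (c t * x1 j) * F j (c t * x2 j))))
        atTop (nhds 1) := by
      have h : Tendsto (fun t => ∏ j ∈ S,
          (1 + n * (F j (c t * x2 j) / F j (c t * x1 j) * F j (c t * x2 j))))
          atTop (nhds (∏ _j ∈ S, (1:ℝ))) :=
        tendsto_finset_prod S (fun j hj => hfac1 j hj)
      simpa using h
    have hUlim : Tendsto (fun t => (n:ℝ)^i * (t * ∏ j ∈ S, F j (c t * x1 j)) *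
        ∏ j ∈ S, (1 + n * (F j (c t * x2 j) / F j (c t * x1 j) * F j (c t * x2 j))))
        atTop (nhds ((n:ℝ)^i * (∏ j ∈ S, κ j * x1 j ^ (-α)) * 1)) :=
      (Tendsto.mul tendsto_const_nhds (hG x1 hx1pos)).mul hprod1
    have hlimlt : (n:ℝ)^i * (∏ j ∈ S, κ j * x1 j ^ (-α)) * 1 < q := by
      rw [mul_one]
      exact hεlt
    filter_upwards [hFpos x1 hx1pos, eventually_ge_atTop (0:ℝ),
      hUlim.eventually (eventually_lt_nhds hlimlt)] with t hpos1 ht hUq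
    refine lt_of_le_of_lt ?_ hUq
    have hfact : ∀ j ∈ S, g j t ≤ n * F j (c t * x1 j) *
        (1 + n * (F j (c t * x2 j) / F j (c t * x1 j) * F j (c t * x2 j))) := by
      intro j hj
      have h := hup ε hε0 hε1 j hj t
      have hne : F j (c t * x1 j) ≠ 0 := ne_of_gt (hpos1 j hj)
      have heq : n * F j (c t * x1 j) *
          (1 + n * (F j (c t * x2 j) / F j (c t * x1 j) * F j (c t * x2 j)))
          = n * F j (c t * x1 j) + (n:ℝ)^2 * (F j (c t * x2 j))^2 := by
        field_simp
      rw [heq]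
      exact h
    have hstep : t * ∏ j ∈ S, g j t ≤ t * ∏ j ∈ S, (n * F j (c t * x1 j) *
        (1 + n * (F j (c t * x2 j) / F j (c t * x1 j) * F j (c t * x2 j)))) :=
      mul_le_mul_of_nonneg_left
        (Finset.prod_le_prod (fun j _ => hgnonneg j t) hfact) ht
    refine le_trans hstep (le_of_eq ?_)
    rw [Finset.prod_mul_distrib, Finset.prod_mul_distrib, Finset.prod_const, hS]
    ring
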